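/- Let c > 0, H > 0, and P ∈ ℝ³ with H > c‖P‖. Define the effective mass M by M c² := √(H² − c² ‖P‖²), the global velocity U := P/M, b := √(c² + ‖U‖²), and the canonical proper-time Hamiltonian K := H²/(2 M c²) + M c²/2. Then: (a) H = M c b; and (b) K = ‖P‖²/(2M) + M c². -/

import Mathlib

/-- For a closed system with total energy `H` and total momentum `P`
satisfying `H > c‖P‖`, the effective mass `M` defined by `Mc² = √(H² − c²‖P‖²)`, the
global velocity `U := P/M` and `b := √(c² + ‖U‖²)` satisfy (a) `H = Mcb` and
(b) `K := H²/(2Mc²) + Mc²/2 = ‖P‖²/(2M) + Mc²`. -/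
theorem stmt12 (c H : ℝ) (hc : 0 < c) (hH : 0 < H)
    (P : EuclideanSpace ℝ (Fin 3)) (hHP : c * ‖P‖ < H)
    (M : ℝ) (hM : M * c ^ 2 = Real.sqrt (H ^ 2 - c ^ 2 * ‖P‖ ^ 2))
    (U : EuclideanSpace ℝ (Fin 3)) (hU : U = M⁻¹ • P)
    (b : ℝ) (hb : b = Real.sqrt (c ^ 2 + ‖U‖ ^ 2))
    (K : ℝ) (hK : K = H ^ 2 / (2 * M * c ^ 2) + M * c ^ 2 / 2) :
    H = M * c * b ∧ K = ‖P‖ ^ 2 / (2 * M) + M * c ^ 2 := by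
  have hPn : 0 ≤ ‖P‖ := norm_nonneg _
  have hpos : 0 < H ^ 2 - c ^ 2 * ‖P‖ ^ 2 := by nlinarith [mul_pos (sub_pos.mpr hHP) (by positivity : (0:ℝ) < H + c * ‖P‖)]
  have hMc2 : (M * c ^ 2) ^ 2 = H ^ 2 - c ^ 2 * ‖P‖ ^ 2 := by
    rw [hM, Real.sq_sqrt hpos.le]
  have hMc2pos : 0 < M * c ^ 2 := by
    rw [hM]; exact Real.sqrt_pos.mpr hpos
  have hMpos : 0 < M := by nlinarith [sq_nonneg c]
  have hU2 : ‖U‖ ^ 2 = ‖P‖ ^ 2 / M ^ 2 := by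
    rw [hU, norm_smul, mul_pow, norm_inv, Real.norm_eq_abs,
      abs_of_pos hMpos, inv_pow]
    field_simp
  have hbpos : 0 < b := by
    rw [hb]; exact Real.sqrt_pos.mpr (by positivity)
  have hb2 : b ^ 2 = c ^ 2 + ‖P‖ ^ 2 / M ^ 2 := by
    rw [hb, Real.sq_sqrt (by positivity), hU2]
  have hMne : M ≠ 0 := hMpos.ne'
  have h2 : H ^ 2 = M ^ 2 * c ^ 4 + c ^ 2 * ‖P‖ ^ 2 := by linear_combination -hMc2
  have hH2 : H ^ 2 = (M * c * b) ^ 2 := by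
    have e : (M * c * b) ^ 2 = M ^ 2 * c ^ 2 * b ^ 2 := by ring
    rw [e, hb2, h2]; field_simp
  have ha : H = M * c * b := by
    have hmcb : 0 < M * c * b := by positivity
    nlinarith [hH2]
  refine ⟨ha, ?_⟩
  rw [hK, h2]
  have hcne : c ≠ 0 := hc.ne'
  field_simp
  ring
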